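/- For every integer n ≥ 3, L(n+1) = L(n) or L(n+1) = L(n) + 1. -/

import Mathlib

noncomputable def L (n : ℕ) : ℕ :=
  sInf {k : ℕ | 0 < k ∧ (n.choose k : ℝ) > 2 ^ n / n}
-- central binomial bound in ℕ
lemma central_nat (n : ℕ) (hn : 3 ≤ n) : 2 ^ n < n * n.choose (n / 2) := by
  rcases Nat.even_or_odd n with ⟨m, hm⟩ | ⟨m, hm⟩
  · -- n = m + m
    subst hm
    have hm2 : 2 ≤ m := by omega
    have hdiv : (m + m) / 2 = m := by omega
    rw [hdiv]
    have hcb : (m + m).choose m = Nat.centralBinom m := by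
      rw [Nat.centralBinom]; ring_nf
    rw [hcb]
    by_cases h4 : 4 ≤ m
    · have h := Nat.four_pow_lt_mul_centralBinom m h4
      have hpow : 2 ^ (m + m) = 4 ^ m := by
        rw [show (4:ℕ) = 2^2 by norm_num, ← pow_mul]; ring_nf
      rw [hpow]
      calc 4 ^ m < m * Nat.centralBinom m := h
        _ ≤ (m + m) * Nat.centralBinom m := by
            exact Nat.mul_le_mul_right _ (by omega)
    · interval_cases m <;> first | omega | decide
  · subst hm
    have hdiv : (2 * m + 1) / 2 = m := by omega
    rw [hdiv]
    have key : 2 * (2 * m + 1).choose m = Nat.centralBinom (m + 1) := by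
      have h1 : Nat.centralBinom (m + 1) = (2 * m + 2).choose (m + 1) := by
        rw [Nat.centralBinom]; ring_nf
      have h2 : (2 * m + 2).choose (m + 1)
          = (2 * m + 1).choose m + (2 * m + 1).choose (m + 1) := by
        exact Nat.choose_succ_succ (2 * m + 1) m
      have h3 : (2 * m + 1).choose (m + 1) = (2 * m + 1).choose m := by
        have := Nat.choose_symm (n := 2 * m + 1) (k := m) (by omega)
        have he : 2 * m + 1 - m = m + 1 := by omega
        rw [he] at this
        exact this
      omega
    by_cases h4 : 3 ≤ m
    · have h := Nat.four_pow_lt_mul_centralBinom (m + 1) (by omega)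
      rw [← key] at h
      have hpow : 4 ^ (m + 1) = 2 * 2 ^ (2 * m + 1) := by
        rw [show (4:ℕ) = 2^2 by norm_num, ← pow_mul]; ring
      rw [hpow] at h
      -- 2 * 2^(2m+1) < (m+1) * (2 * C)
      nlinarith [Nat.choose_pos (show m ≤ 2 * m + 1 by omega)]
    · interval_cases m <;> first | omega | decide

lemma mem_S_iff (n k : ℕ) (hn : 0 < n) :
    (k ∈ {k : ℕ | 0 < k ∧ (n.choose k : ℝ) > 2 ^ n / n}) ↔
      0 < k ∧ 2 ^ n < n * n.choose k := by
  simp only [Set.mem_setOf_eq, gt_iff_lt]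
  have hn' : (0:ℝ) < n := by exact_mod_cast hn
  rw [div_lt_iff₀ hn']
  constructor
  · rintro ⟨h1, h2⟩
    refine ⟨h1, ?_⟩
    have : (2:ℝ) ^ n < (n * n.choose k : ℕ) := by push_cast; linarith
    exact_mod_cast this
  · rintro ⟨h1, h2⟩
    refine ⟨h1, ?_⟩
    have : ((2 ^ n : ℕ) : ℝ) < ((n * n.choose k : ℕ) : ℝ) := by exact_mod_cast h2
    push_cast at this
    linarith

lemma half_mem_S (n : ℕ) (hn : 3 ≤ n) :
    n / 2 ∈ {k : ℕ | 0 < k ∧ (n.choose k : ℝ) > 2 ^ n / n} := by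
  rw [mem_S_iff n _ (by omega)]
  exact ⟨by omega, central_nat n hn⟩

lemma L_mem (n : ℕ) (hn : 3 ≤ n) : 0 < L n ∧ 2 ^ n < n * n.choose (L n) := by
  have h := Nat.sInf_mem ⟨n / 2, half_mem_S n hn⟩
  rw [mem_S_iff n _ (by omega)] at h
  exact h

lemma L_le_half (n : ℕ) (hn : 3 ≤ n) : L n ≤ n / 2 :=
  Nat.sInf_le (half_mem_S n hn)

-- identity: (n+1).choose m * (n+1-m) = (n+1) * n.choose m
lemma choose_id (n m : ℕ) : (n+1).choose m * (n + 1 - m) = (n+1) * n.choose m := by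
  have h1 := Nat.choose_succ_right_eq (n+1) m
  have h2 := Nat.add_one_mul_choose_eq n m
  omega

theorem L_succ_eq_or_succ (n : ℕ) (hn : 3 ≤ n) :
    L (n + 1) = L n ∨ L (n + 1) = L n + 1 := by
  obtain ⟨hLpos, hLineq⟩ := L_mem n hn
  have hLhalf := L_le_half n hn
  -- upper bound : L (n+1) ≤ L n + 1
  have hup : L (n + 1) ≤ L n + 1 := by
    apply Nat.sInf_le
    rw [mem_S_iff (n+1) _ (by omega)]
    refine ⟨by omega, ?_⟩
    set k := L n with hk
    have hid := Nat.add_one_mul_choose_eq n k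
    -- (n+1) * choose n k = choose (n+1) (k+1) * (k+1)
    have hkn : 2 * n * (k + 1) ≤ (n+1)^2 := by
      have : 2 * k ≤ n := by omega
      nlinarith
    -- from n * C > 2^n derive (n+1) * choose (n+1) (k+1) > 2^(n+1)
    have key : (n+1)^2 * n.choose k * n > 2 ^ (n+1) * (k+1) * n := by
      calc (n+1)^2 * n.choose k * n = (n+1)^2 * (n * n.choose k) := by ring
        _ ≥ (n+1)^2 * (2^n + 1) := by
            exact Nat.mul_le_mul_left _ (by omega)
        _ ≥ 2 * n * (k+1) * (2^n + 1) := by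
            exact Nat.mul_le_mul_right _ hkn
        _ > 2 * n * (k+1) * 2^n := by
            have hpos : 0 < 2 * n * (k+1) := by positivity
            nlinarith
        _ = 2 ^ (n+1) * (k+1) * n := by ring
    have key2 : (n+1)^2 * n.choose k > 2 ^ (n+1) * (k+1) :=
      lt_of_mul_lt_mul_right key (Nat.zero_le n)
    have key3 : (n+1) * ((n+1).choose (k+1) * (k+1)) > 2 ^ (n+1) * (k+1) := by
      calc (n+1) * ((n+1).choose (k+1) * (k+1)) = (n+1) * ((n+1) * n.choose k) := by
            rw [← hid]
        _ = (n+1)^2 * n.choose k := by ring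
        _ > 2 ^ (n+1) * (k+1) := key2
    have := lt_of_mul_lt_mul_right (a := k+1)
      (by calc 2 ^ (n+1) * (k+1) < (n+1) * ((n+1).choose (k+1) * (k+1)) := key3
            _ = (n+1) * (n+1).choose (k+1) * (k+1) := by ring) (Nat.zero_le _)
    exact this
  -- lower bound : L n ≤ L (n+1)
  have hlo : L n ≤ L (n + 1) := by
    obtain ⟨hmpos, hmineq⟩ := L_mem (n+1) (by omega)
    set m := L (n+1) with hm
    by_cases hcase : 2 * m + 1 ≤ n
    · -- show m ∈ S n, so L n ≤ m
      apply Nat.sInf_le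
      rw [mem_S_iff n _ (by omega)]
      refine ⟨hmpos, ?_⟩
      have hid := choose_id n m
      have hsub : n + 1 - m = n + 1 - m := rfl
      set d := n + 1 - m with hd
      have hdm : m + d = n + 1 := by omega
      have h2nd : (n+1)^2 + 1 ≤ 2 * n * d := by nlinarith
      -- (n+1) * choose (n+1) m > 2^(n+1)
      have key : (n+1)^2 * (n * n.choose m) > (n+1)^2 * 2^n := by
        calc (n+1)^2 * (n * n.choose m)
            = n * ((n+1) * ((n+1) * n.choose m)) := by ring
          _ = n * ((n+1) * ((n+1).choose m * d)) := by rw [← hid]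
          _ = (n * d) * ((n+1) * (n+1).choose m) := by ring
          _ ≥ (n * d) * (2^(n+1) + 1) := by
              exact Nat.mul_le_mul_left _ (by omega)
          _ = 2 * n * d * 2^n + n * d := by ring
          _ ≥ ((n+1)^2 + 1) * 2^n + n * d := by
              exact Nat.add_le_add_right (Nat.mul_le_mul_right _ h2nd) _
          _ > (n+1)^2 * 2^n := by
              have : 0 < 2^n := Nat.pow_pos (by norm_num)
              nlinarith
      have := lt_of_mul_lt_mul_left key (Nat.zero_le ((n+1)^2))
      omega
    · -- m ≥ (n+1)/2 ≥ n/2 ≥ L n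
      have : n / 2 ≤ m := by omega
      omega
  omega
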